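/- Let V and U be vector spaces over a field of characteristic zero. Let ρ : V⁴ → U be a 4-linear map which satisfies the circular identity with respect to its first three entries, i.e. ρ(v₁,v₂,v₃,v₄) + ρ(v₂,v₃,v₁,v₄) + ρ(v₃,v₁,v₂,v₄) = 0, and with respect to its last three entries, i.e. ρ(v₁,v₂,v₃,v₄) + ρ(v₁,v₃,v₄,v₂) + ρ(v₁,v₄,v₂,v₃) = 0, and which is antisymmetric in its second and third entries. Define ρ₂(v₁,v₂,v₃,v₄) := ρ(v₂,v₁,v₃,v₄) and ρ₃(v₁,v₂,v₃,v₄) := ρ(v₂,v₃,v₁,v₄). Then Sym_{2,3,4}( Alt₂( Sym_{3,4} ρ ) ) = −2·Sym_{2,3,4} ρ₂ = 2·Sym_{2,3,4} ρ₃. -/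
import Mathlib

/-- `Sym_{2,3,4}` (without normalizing coefficient) of a 4-entry expression. -/
def Sym234 {V U : Type*} [AddCommMonoid U] (θ : V → V → V → V → U)
    (a b c d : V) : U :=
  θ a b c d + θ a b d c + θ a c b d + θ a c d b + θ a d b c + θ a d c b

/-- `Alt₂(Sym_{3,4} ρ)` (without normalizing coefficients) of a 4-linear map. -/
def Alt2Sym34 {K V U : Type*} [Field K] [AddCommGroup V] [Module K V]
    [AddCommGroup U] [Module K U]
    (ρ : MultilinearMap K (fun _ : Fin 4 => V) U) (a b c d : V) : U :=
  ρ ![a, b, c, d] + ρ ![a, b, d, c] - ρ ![b, a, c, d] - ρ ![b, a, d, c]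

/-- For a 4-linear `ρ` satisfying the circular identity in its first three and
last three entries and antisymmetric in its second and third entries,
`Sym_{2,3,4}(Alt₂(Sym_{3,4} ρ)) = −2·Sym_{2,3,4} ρ₂ = 2·Sym_{2,3,4} ρ₃`
where `ρ₂(v₁,v₂,v₃,v₄) = ρ(v₂,v₁,v₃,v₄)` and `ρ₃(v₁,v₂,v₃,v₄) = ρ(v₂,v₃,v₁,v₄)`. -/
theorem sym_alt_sym_eq
    {K V U : Type*} [Field K] [CharZero K] [AddCommGroup V] [Module K V]
    [AddCommGroup U] [Module K U]
    (ρ : MultilinearMap K (fun _ : Fin 4 => V) U)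
    (hc1 : ∀ v₁ v₂ v₃ v₄ : V,
      ρ ![v₁, v₂, v₃, v₄] + ρ ![v₂, v₃, v₁, v₄] + ρ ![v₃, v₁, v₂, v₄] = 0)
    (hc2 : ∀ v₁ v₂ v₃ v₄ : V,
      ρ ![v₁, v₂, v₃, v₄] + ρ ![v₁, v₃, v₄, v₂] + ρ ![v₁, v₄, v₂, v₃] = 0)
    (hanti : ∀ v₁ v₂ v₃ v₄ : V, ρ ![v₁, v₃, v₂, v₄] = - ρ ![v₁, v₂, v₃, v₄]) :
    ∀ v₁ v₂ v₃ v₄ : V,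
      Sym234 (Alt2Sym34 ρ) v₁ v₂ v₃ v₄ =
        (-2 : K) • Sym234 (fun a b c d => ρ ![b, a, c, d]) v₁ v₂ v₃ v₄ ∧
      (-2 : K) • Sym234 (fun a b c d => ρ ![b, a, c, d]) v₁ v₂ v₃ v₄ =
        (2 : K) • Sym234 (fun a b c d => ρ ![b, c, a, d]) v₁ v₂ v₃ v₄ := by
  intro v₁ v₂ v₃ v₄
  constructor
  · simp only [Sym234, Alt2Sym34]
    linear_combination (norm := module)
      (2 : K) • hc2 v₁ v₂ v₃ v₄ + (2 : K) • hc2 v₁ v₂ v₄ v₃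
  · simp only [Sym234]
    linear_combination (norm := module)
      (-2 : K) • hc1 v₁ v₂ v₃ v₄ + (2 : K) • hc2 v₁ v₂ v₃ v₄ +
      (-2 : K) • hc1 v₁ v₂ v₄ v₃ + (2 : K) • hc2 v₁ v₂ v₄ v₃ +
      (-2 : K) • hc1 v₁ v₃ v₂ v₄ + (-2 : K) • hc1 v₁ v₃ v₄ v₂ +
      (-2 : K) • hc1 v₁ v₄ v₂ v₃ + (-2 : K) • hc1 v₁ v₄ v₃ v₂
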